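/- For all real numbers n, t ≥ 1, s ≥ 2, and real k with s+2 ≤ k ≤ r+s-t-1 where r = ⌈n/(s+1)⌉, we have ψ(n+k-r) - ψ(k+1) > ψ(r-t-k+s+1) - ψ(k-s+1), where ψ is the digamma function. -/

import Mathlib

open Real Set Finset

/-- The digamma function `ψ = Γ'/Γ`, as the derivative of `log ∘ Γ`. -/
noncomputable def digamma (x : ℝ) : ℝ := deriv (fun y : ℝ => Real.log (Real.Gamma y)) x

lemma my_diffAt {x : ℝ} (hx : 0 < x) :
    DifferentiableAt ℝ (fun y : ℝ => Real.log (Real.Gamma y)) x := by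
  have h1 : ∀ m : ℕ, x ≠ -m := fun m => by
    have : (0:ℝ) ≤ m := Nat.cast_nonneg m
    intro h; rw [h] at hx; linarith
  exact (Real.differentiableAt_Gamma h1).log (Real.Gamma_ne_zero h1)

lemma my_convex : ConvexOn ℝ (Set.Ioi (0:ℝ)) (fun y : ℝ => Real.log (Real.Gamma y)) := by
  simpa [Function.comp_def] using Real.convexOn_log_Gamma

lemma logGamma_rec {y : ℝ} (hy : 0 < y) :
    Real.log (Real.Gamma (y + 1)) = Real.log (Real.Gamma y) + Real.log y := by
  rw [Real.Gamma_add_one hy.ne', Real.log_mul hy.ne' (Real.Gamma_pos_of_pos hy).ne', add_comm]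

lemma digamma_add_one {x : ℝ} (hx : 0 < x) : digamma (x + 1) = digamma x + 1 / x := by
  unfold digamma
  rw [← deriv_comp_add_const, one_div, ← Real.deriv_log,
    ← deriv_add (my_diffAt hx) (Real.differentiableAt_log hx.ne')]
  apply Filter.EventuallyEq.deriv_eq
  filter_upwards [eventually_gt_nhds hx] with y hy using logGamma_rec hy

lemma digamma_le_log {x : ℝ} (hx : 0 < x) : digamma x ≤ Real.log x := by
  have h := my_convex.deriv_le_slope (Set.mem_Ioi.mpr hx)
    (Set.mem_Ioi.mpr (by linarith : (0:ℝ) < x + 1)) (by linarith) (my_diffAt hx)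
  rw [slope_def_field, logGamma_rec hx] at h
  simpa [digamma] using h

lemma log_le_digamma {x : ℝ} (hx : 1 < x) : Real.log (x - 1) ≤ digamma x := by
  have hx0 : (0:ℝ) < x - 1 := by linarith
  have h := my_convex.slope_le_deriv (Set.mem_Ioi.mpr hx0)
    (Set.mem_Ioi.mpr (by linarith : (0:ℝ) < x)) (by linarith) (my_diffAt (by linarith))
  rw [slope_def_field] at h
  have : Real.log (Real.Gamma x) = Real.log (Real.Gamma (x-1)) + Real.log (x-1) := by
    have := logGamma_rec hx0; rw [sub_add_cancel] at this; exact this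
  rw [this] at h
  simpa [digamma] using h

lemma digamma_mono {x y : ℝ} (hx : 0 < x) (hxy : x ≤ y) : digamma x ≤ digamma y := by
  have := my_convex.monotoneOn_deriv (fun z hz => my_diffAt (Set.mem_Ioi.mp hz))
  exact this (Set.mem_Ioi.mpr hx) (Set.mem_Ioi.mpr (lt_of_lt_of_le hx hxy)) hxy

lemma digamma_add_nat {x : ℝ} (hx : 0 < x) (n : ℕ) :
    digamma (x + n) = digamma x + ∑ j ∈ Finset.range n, 1 / (x + j) := by
  induction n with
  | zero => simp
  | succ m ih =>
    have hxm : 0 < x + m := by positivity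
    have : x + (m+1 : ℕ) = (x + m) + 1 := by push_cast; ring
    rw [this, digamma_add_one hxm, ih, Finset.sum_range_succ]
    ring

lemma log_ratio_lower {u : ℝ} (hu : 0 < u) (hu6 : u ≤ 1/6) :
    2*u + 2/3*u^3 - 2*(u^5/(1-u)) ≤ Real.log (1+u) - Real.log (1-u) := by
  have hu1 : |u| < 1 := by rw [abs_of_pos hu]; linarith
  have hu1' : |(-u)| < 1 := by rwa [abs_neg]
  have h1 := Real.abs_log_sub_add_sum_range_le hu1' 4
  have h2 := Real.abs_log_sub_add_sum_range_le hu1 4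
  rw [abs_le] at h1 h2
  have e1 : ∑ i ∈ Finset.range 4, (-u) ^ (i+1) / (i+1) = -u + u^2/2 - u^3/3 + u^4/4 := by
    simp [Finset.sum_range_succ]; ring
  have e2 : ∑ i ∈ Finset.range 4, u ^ (i+1) / (i+1) = u + u^2/2 + u^3/3 + u^4/4 := by
    simp [Finset.sum_range_succ]; ring
  rw [e1] at h1; rw [e2] at h2
  have ha : |(-u)| = u := by rw [abs_neg, abs_of_pos hu]
  rw [ha] at h1
  rw [abs_of_pos hu] at h2
  have h1' := h1.1
  have h2' := h2.2
  rw [show (1:ℝ) - -u = 1 + u by ring] at h1'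
  norm_num at h1' h2'
  linarith

lemma log_ratio_upper {u : ℝ} (hu : 0 < u) (hu6 : u ≤ 1/6) :
    Real.log (1+u) - Real.log (1-u) ≤ 2*u + 2/3*u^3 + 2*(u^5/(1-u)) := by
  have hu1 : |u| < 1 := by rw [abs_of_pos hu]; linarith
  have hu1' : |(-u)| < 1 := by rwa [abs_neg]
  have h1 := Real.abs_log_sub_add_sum_range_le hu1' 4
  have h2 := Real.abs_log_sub_add_sum_range_le hu1 4
  rw [abs_le] at h1 h2
  have e1 : ∑ i ∈ Finset.range 4, (-u) ^ (i+1) / (i+1) = -u + u^2/2 - u^3/3 + u^4/4 := by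
    simp [Finset.sum_range_succ]; ring
  have e2 : ∑ i ∈ Finset.range 4, u ^ (i+1) / (i+1) = u + u^2/2 + u^3/3 + u^4/4 := by
    simp [Finset.sum_range_succ]; ring
  rw [e1] at h1; rw [e2] at h2
  have ha : |(-u)| = u := by rw [abs_neg, abs_of_pos hu]
  rw [ha] at h1
  rw [abs_of_pos hu] at h2
  have h1' := h1.2
  have h2' := h2.1
  rw [show (1:ℝ) - -u = 1 + u by ring] at h1'
  norm_num at h1' h2'
  linarith

lemma log_half_lower {b : ℝ} (hb : 3 ≤ b) :
    1/b ≤ Real.log (b + 1/2) - Real.log (b - 1/2) := by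
  have hb0 : 0 < b := by linarith
  set u : ℝ := 1/(2*b) with hu_def
  have hu : 0 < u := by positivity
  have hu6 : u ≤ 1/6 := by
    rw [hu_def, div_le_div_iff₀ (by linarith) (by norm_num)]; linarith
  have hbu1 : b + 1/2 = b * (1+u) := by rw [hu_def]; field_simp; try ring
  have hbu2 : b - 1/2 = b * (1-u) := by rw [hu_def]; field_simp; try ring
  have h1u : (0:ℝ) < 1 + u := by linarith
  have h2u : (0:ℝ) < 1 - u := by linarith
  rw [hbu1, hbu2, Real.log_mul hb0.ne' h1u.ne', Real.log_mul hb0.ne' h2u.ne']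
  have hlow := log_ratio_lower hu hu6
  have h2b : 2*u = 1/b := by rw [hu_def]; field_simp; try ring
  have htail : 2*(u^5/(1-u)) ≤ 2/3*u^3 := by
    rw [mul_comm, div_mul_eq_mul_div, div_le_iff₀ h2u]
    nlinarith [pow_pos hu 3, pow_pos hu 5, sq_nonneg u]
  linarith

lemma log_half_upper {b : ℝ} (hb : 3 ≤ b) :
    Real.log (b + 1/2) - Real.log (b - 1/2) ≤ 1/b + 1/(10*b^3) := by
  have hb0 : 0 < b := by linarith
  set u : ℝ := 1/(2*b) with hu_def
  have hu : 0 < u := by positivity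
  have hu6 : u ≤ 1/6 := by
    rw [hu_def, div_le_div_iff₀ (by linarith) (by norm_num)]; linarith
  have hbu1 : b + 1/2 = b * (1+u) := by rw [hu_def]; field_simp; try ring
  have hbu2 : b - 1/2 = b * (1-u) := by rw [hu_def]; field_simp; try ring
  have h1u : (0:ℝ) < 1 + u := by linarith
  have h2u : (0:ℝ) < 1 - u := by linarith
  rw [hbu1, hbu2, Real.log_mul hb0.ne' h1u.ne', Real.log_mul hb0.ne' h2u.ne']
  have hup := log_ratio_upper hu hu6
  have h2b : 2*u = 1/b := by rw [hu_def]; field_simp; try ring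
  have hu3 : u^3 = 1/(8*b^3) := by rw [hu_def]; field_simp; try ring
  have htail : 2*(u^5/(1-u)) ≤ 2/15*u^3 := by
    rw [mul_comm, div_mul_eq_mul_div, div_le_iff₀ h2u]
    nlinarith [pow_pos hu 3, pow_pos hu 5, sq_nonneg u]
  have : 2/3*u^3 + 2/15*u^3 = 4/5*u^3 := by ring
  have hfin : 4/5*u^3 = 1/(10*b^3) := by rw [hu3]; ring
  linarith

lemma sum_inv_le_logdiff {D : ℝ} (hD : 3 ≤ D) (N : ℕ) :
    ∑ j ∈ Finset.range N, 1 / (D + j) ≤ Real.log (D + N - 1/2) - Real.log (D - 1/2) := by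
  have tele : ∑ j ∈ Finset.range N,
      (Real.log (D + (j+1:ℕ) - 1/2) - Real.log (D + j - 1/2))
      = Real.log (D + N - 1/2) - Real.log (D + (0:ℕ) - 1/2) :=
    Finset.sum_range_sub (fun j => Real.log (D + j - 1/2)) N
  simp only [Nat.cast_zero, add_zero] at tele
  rw [← tele]
  apply Finset.sum_le_sum
  intro j _
  have hb : 3 ≤ D + j := by
    have : (0:ℝ) ≤ j := Nat.cast_nonneg j
    linarith
  have := log_half_lower hb
  have e1 : D + (j+1:ℕ) - 1/2 = (D + j) + 1/2 := by push_cast; ring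
  have e2 : D + j - 1/2 = (D + j) - 1/2 := by ring
  rw [e1, e2]
  linarith

lemma sum_inv_ge_logdiff {c : ℝ} (hc : 5 ≤ c) (N : ℕ) :
    Real.log (c + N - 1/2) - Real.log (c - 1/2) - 1/(16*(c-1)*c)
      ≤ ∑ j ∈ Finset.range N, 1 / (c + j) := by
  have tele : ∑ j ∈ Finset.range N,
      (Real.log (c + (j+1:ℕ) - 1/2) - Real.log (c + j - 1/2))
      = Real.log (c + N - 1/2) - Real.log (c + (0:ℕ) - 1/2) :=
    Finset.sum_range_sub (fun j => Real.log (c + j - 1/2)) N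
  simp only [Nat.cast_zero, add_zero] at tele
  -- correction telescoping
  have tele2 : ∑ j ∈ Finset.range N,
      (1/(16*(c + (j:ℕ) - 1)*(c + j)) - 1/(16*(c + (j+1:ℕ) - 1)*(c + (j+1:ℕ))))
      = 1/(16*(c + (0:ℕ) - 1)*(c + (0:ℕ))) - 1/(16*(c + (N:ℕ) - 1)*(c + N)) := by
    have := Finset.sum_range_sub' (fun j => 1/(16*(c + (j:ℕ) - 1)*(c + j))) N
    simpa using this
  simp only [Nat.cast_zero, add_zero] at tele2
  have key : ∀ j ∈ Finset.range N,
      (Real.log (c + (j+1:ℕ) - 1/2) - Real.log (c + j - 1/2))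
        - (1/(16*(c + (j:ℕ) - 1)*(c + j)) - 1/(16*(c + (j+1:ℕ) - 1)*(c + (j+1:ℕ))))
      ≤ 1 / (c + j) := by
    intro j _
    have hj : (0:ℝ) ≤ j := Nat.cast_nonneg j
    set x : ℝ := c + j with hx
    have hx5 : 5 ≤ x := by rw [hx]; linarith
    have hx0 : (0:ℝ) < x := by linarith
    have e1 : c + (j+1:ℕ) - 1/2 = x + 1/2 := by rw [hx]; push_cast; ring
    have e2 : c + j - 1/2 = x - 1/2 := by rw [hx]
    have e3 : c + (j:ℕ) - 1 = x - 1 := by rw [hx]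
    have e4 : c + (j+1:ℕ) - 1 = x := by rw [hx]; push_cast; ring
    have e5 : c + (j+1:ℕ) = x + 1 := by rw [hx]; push_cast; ring
    rw [e1, e2, e3, e4, e5]
    have hup := log_half_upper (by linarith : 3 ≤ x)
    -- need: 1/(10x^3) ≤ 1/(16(x-1)x) - 1/(16 x (x+1))
    have hp1 : (0:ℝ) < 16*(x-1)*x := by nlinarith
    have hp2 : (0:ℝ) < 16*x*(x+1) := by nlinarith
    have hcorr : 1/(10*x^3) ≤ 1/(16*(x-1)*x) - 1/(16*x*(x+1)) := by
      rw [div_sub_div _ _ hp1.ne' hp2.ne', div_le_div_iff₀ (by positivity) (by positivity)]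
      nlinarith [pow_pos hx0 3]
    linarith
  calc Real.log (c + N - 1/2) - Real.log (c - 1/2) - 1/(16*(c-1)*c)
      ≤ Real.log (c + N - 1/2) - Real.log (c - 1/2)
        - (1/(16*(c-1)*c) - 1/(16*(c + (N:ℕ) - 1)*(c + N))) := by
        have hN : (0:ℝ) ≤ N := Nat.cast_nonneg N
        have : 0 < 16*(c + (N:ℕ) - 1)*(c + N) := by nlinarith
        have : 0 < 1/(16*(c + (N:ℕ) - 1)*(c + N)) := by positivity
        linarith
    _ = ∑ j ∈ Finset.range N,
        ((Real.log (c + (j+1:ℕ) - 1/2) - Real.log (c + j - 1/2))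
        - (1/(16*(c + (j:ℕ) - 1)*(c + j)) - 1/(16*(c + (j+1:ℕ) - 1)*(c + (j+1:ℕ))))) := by
        rw [Finset.sum_sub_distrib, tele, tele2]
    _ ≤ ∑ j ∈ Finset.range N, 1 / (c + j) := Finset.sum_le_sum key

lemma ratio_poly {D s : ℝ} (hD : 3 ≤ D) (hs : 2 ≤ s) :
    16*(D+s-1)*(D+s) * ( s*(D-1/2)*(D+29)*(D+s+59/2) - (D+s-1/2)*(D+59/2)*(D+s+30) )
      ≥ s*(D-1/2)*(D+29)*(D+s+59/2) := by
  obtain ⟨d, hd, rfl⟩ : ∃ d, 0 ≤ d ∧ D = d + 3 := ⟨D - 3, by linarith, by ring⟩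
  obtain ⟨g, hg, rfl⟩ : ∃ g, 0 ≤ g ∧ s = g + 2 := ⟨s - 2, by linarith, by ring⟩
  have key : 16*((d+3)+(g+2)-1)*((d+3)+(g+2)) *
      ( (g+2)*((d+3)-1/2)*((d+3)+29)*((d+3)+(g+2)+59/2)
        - ((d+3)+(g+2)-1/2)*((d+3)+59/2)*((d+3)+(g+2)+30) )
      - (g+2)*((d+3)-1/2)*((d+3)+29)*((d+3)+(g+2)+59/2)
      = 122880 + 578460*g + 257160*g^2 + 33020*g^3 + 760*g^4 + (813999/2)*d
        + (3202131/4)*d*g + (530555/2)*d*g^2 + 26100*d*g^3 + 536*d*g^4 + 185694*d^2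
        + 270673*d^2*g + 56407*d^2*g^2 + 2320*d^2*g^3 + 16*d^2*g^4 + 27410*d^3
        + 32267*d^3*g + 3048*d^3*g^2 + 48*d^3*g^3 + 1200*d^4 + 1280*d^4*g
        + 48*d^4*g^2 + 16*d^5 + 16*d^5*g := by ring
  nlinarith [mul_nonneg hd hg, mul_nonneg (mul_nonneg hd hd) hg,
    mul_nonneg (mul_nonneg hd hg) hg, sq_nonneg d, sq_nonneg g,
    pow_nonneg hd 2, pow_nonneg hd 3, pow_nonneg hd 4, pow_nonneg hd 5,
    pow_nonneg hg 2, pow_nonneg hg 3, pow_nonneg hg 4,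
    mul_nonneg (pow_nonneg hd 2) (pow_nonneg hg 2),
    mul_nonneg (pow_nonneg hd 2) (pow_nonneg hg 3),
    mul_nonneg (pow_nonneg hd 2) (pow_nonneg hg 4),
    mul_nonneg (pow_nonneg hd 3) (pow_nonneg hg 2),
    mul_nonneg (pow_nonneg hd 3) (pow_nonneg hg 3),
    mul_nonneg (pow_nonneg hd 4) (pow_nonneg hg 2),
    mul_nonneg hd (pow_nonneg hg 2),
    mul_nonneg hd (pow_nonneg hg 3),
    mul_nonneg hd (pow_nonneg hg 4),
    mul_nonneg (pow_nonneg hd 2) hg,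
    mul_nonneg (pow_nonneg hd 3) hg,
    mul_nonneg (pow_nonneg hd 4) hg,
    mul_nonneg (pow_nonneg hd 5) hg]

lemma digamma_diff_le_log {D s : ℝ} (hD : 3 ≤ D) (hs : 2 ≤ s) :
    digamma (D + s) - digamma D ≤ Real.log s := by
  have hD0 : (0:ℝ) < D := by linarith
  have hs0 : (0:ℝ) < s := by linarith
  have hDs0 : (0:ℝ) < D + s := by linarith
  have h1 := digamma_add_nat hDs0 30
  have h2 := digamma_add_nat hD0 30
  have c30 : ((30:ℕ):ℝ) = 30 := by norm_num
  rw [c30] at h1 h2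
  have h3 : digamma (D + s + 30) ≤ Real.log (D + s + 30) := digamma_le_log (by linarith)
  have h4 : Real.log (D + 29) ≤ digamma (D + 30) := by
    have := log_le_digamma (by linarith : (1:ℝ) < D + 30)
    have e : D + 30 - 1 = D + 29 := by ring
    rwa [e] at this
  have h5 := sum_inv_le_logdiff hD 30
  have h6 := sum_inv_ge_logdiff (by linarith : 5 ≤ D + s) 30
  rw [c30] at h5 h6
  -- the log comparison
  have hs05 : (0:ℝ) < D + s - 1/2 := by linarith
  have hD595 : (0:ℝ) < D + 59/2 := by linarith
  have hDs30 : (0:ℝ) < D + s + 30 := by linarith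
  have hD05 : (0:ℝ) < D - 1/2 := by linarith
  have hD29 : (0:ℝ) < D + 29 := by linarith
  have hDs595 : (0:ℝ) < D + s + 59/2 := by linarith
  have hNum : (0:ℝ) < s*(D-1/2)*(D+29)*(D+s+59/2) :=
    mul_pos (mul_pos (mul_pos hs0 hD05) hD29) hDs595
  have hDen : (0:ℝ) < (D+s-1/2)*(D+59/2)*(D+s+30) :=
    mul_pos (mul_pos hs05 hD595) hDs30
  have hlog1 : Real.log ((D+s-1/2)*(D+59/2)*(D+s+30)) - Real.log (s*(D-1/2)*(D+29)*(D+s+59/2))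
      ≤ (D+s-1/2)*(D+59/2)*(D+s+30) / (s*(D-1/2)*(D+29)*(D+s+59/2)) - 1 := by
    have := Real.log_le_sub_one_of_pos (x := (D+s-1/2)*(D+59/2)*(D+s+30) / (s*(D-1/2)*(D+29)*(D+s+59/2))) (by positivity)
    rwa [Real.log_div hDen.ne' hNum.ne'] at this
  have hfrac : (D+s-1/2)*(D+59/2)*(D+s+30) / (s*(D-1/2)*(D+29)*(D+s+59/2)) - 1
      ≤ - (1/(16*(D+s-1)*(D+s))) := by
    have hpos2 : (0:ℝ) < 16*(D+s-1)*(D+s) := by nlinarith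
    rw [div_sub_one hNum.ne']
    have hstep : ((D+s-1/2)*(D+59/2)*(D+s+30) - s*(D-1/2)*(D+29)*(D+s+59/2))
        / (s*(D-1/2)*(D+29)*(D+s+59/2)) ≤ (-1)/(16*(D+s-1)*(D+s)) := by
      rw [div_le_div_iff₀ hNum hpos2]
      nlinarith [ratio_poly hD hs]
    have : (-1)/(16*(D+s-1)*(D+s)) = -(1/(16*(D+s-1)*(D+s))) := by ring
    linarith [hstep.trans_eq this]
  -- expand logs of products
  have eDen : Real.log ((D+s-1/2)*(D+59/2)*(D+s+30))
      = Real.log (D+s-1/2) + Real.log (D+59/2) + Real.log (D+s+30) := by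
    rw [Real.log_mul (by positivity) hDs30.ne', Real.log_mul hs05.ne' hD595.ne']
  have eNum : Real.log (s*(D-1/2)*(D+29)*(D+s+59/2))
      = Real.log s + Real.log (D-1/2) + Real.log (D+29) + Real.log (D+s+59/2) := by
    rw [Real.log_mul (by positivity) hDs595.ne', Real.log_mul (by positivity) hD29.ne',
      Real.log_mul hs0.ne' hD05.ne']
  have e1 : D + 30 - 1/2 = D + 59/2 := by ring
  have e2 : D + s + 30 - 1/2 = D + s + 59/2 := by ring
  rw [e1] at h5
  rw [e2] at h6
  -- assemble
  have final : digamma (D + s) - digamma D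
      ≤ Real.log (D+s+30) - Real.log (D+29)
        - (Real.log (D+s+59/2) - Real.log (D+s-1/2) - 1/(16*(D+s-1)*(D+s)))
        + (Real.log (D+59/2) - Real.log (D-1/2)) := by linarith
  have hlogcomb := hlog1.trans hfrac
  rw [eDen, eNum] at hlogcomb
  linarith

theorem stmt_7 (n t s k : ℝ) (hn : 1 ≤ n) (ht : 1 ≤ t) (hs : 2 ≤ s)
    (r : ℤ) (hr : r = ⌈n / (s + 1)⌉)
    (hk1 : s + 2 ≤ k) (hk2 : k ≤ (r : ℝ) + s - t - 1) :
    digamma (n + k - r) - digamma (k + 1) >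
      digamma ((r : ℝ) - t - k + s + 1) - digamma (k - s + 1) := by
  have hs1 : (0:ℝ) < s + 1 := by linarith
  have hceil : ((r:ℝ)) < n/(s+1) + 1 := by
    rw [hr]; exact_mod_cast Int.ceil_lt_add_one (n / (s+1))
  have hn1 : (s+1) * ((r:ℝ) - 1) < n := by
    have h' : (r:ℝ) - 1 < n/(s+1) := by linarith
    calc (s+1) * ((r:ℝ) - 1) < (s+1) * (n/(s+1)) := by
          exact mul_lt_mul_of_pos_left h' hs1
      _ = n := by field_simp
  have hB2 : (2:ℝ) ≤ (r:ℝ) - t - k + s + 1 := by linarith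
  have hD3 : (3:ℝ) ≤ k - s + 1 := by linarith
  have hAB : s * ((r:ℝ) - t - k + s + 1) + 1 < n + k - r := by
    nlinarith [mul_nonneg (by linarith : (0:ℝ) ≤ t - 1) (by linarith : (0:ℝ) ≤ s),
      mul_nonneg (by linarith : (0:ℝ) ≤ k - s - 2) (by linarith : (0:ℝ) ≤ s)]
  have hsB : (0:ℝ) < s * ((r:ℝ) - t - k + s + 1) := by nlinarith
  have hA1 : (1:ℝ) < n + k - r := by nlinarith
  have l1 : digamma ((r:ℝ) - t - k + s + 1) ≤ Real.log ((r:ℝ) - t - k + s + 1) :=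
    digamma_le_log (by linarith)
  have l2 : Real.log (n + k - r - 1) ≤ digamma (n + k - r) := log_le_digamma hA1
  have l3 : digamma ((k - s + 1) + s) - digamma (k - s + 1) ≤ Real.log s :=
    digamma_diff_le_log hD3 hs
  have ekc : (k - s + 1) + s = k + 1 := by ring
  rw [ekc] at l3
  have l4 : Real.log (s * ((r:ℝ) - t - k + s + 1)) < Real.log (n + k - r - 1) :=
    Real.log_lt_log hsB (by linarith)
  rw [Real.log_mul (by linarith : s ≠ 0) (by linarith : (r:ℝ) - t - k + s + 1 ≠ 0)] at l4
  linarith
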